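/- arXiv:1408.2099 — 4 statements merged into one kernel-verified Lean document; each statement's English description precedes it below -/
import Mathlib

section
/- Let F0∈ℝ and ψ be smooth on {R>0}×ℝ_φ×ℝ_Z. Set B := ((1/R)∂_Zψ)e_R+(F0/R)e_φ+(−(1/R)∂_Rψ)e_Z, J := ∇×B, and j := Δ*ψ. Then e_φ·∇×(R²(J×B)) = [ψ,j] − (F0/R)∂_φ j. -/
noncomputable section
set_option linter.unusedVariables false

open Real

/-- Scalar fields on the cylindrical domain, as functions of `(R, φ, Z)`. -/
abbrev F3 := ℝ → ℝ → ℝ → ℝ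

/-- Partial derivative in `R`. -/
def dR (f : F3) (R φ Z : ℝ) : ℝ := deriv (fun r => f r φ Z) R

/-- Partial derivative in `φ`. -/
def dP (f : F3) (R φ Z : ℝ) : ℝ := deriv (fun a => f R a Z) φ

/-- Partial derivative in `Z`. -/
def dZ (f : F3) (R φ Z : ℝ) : ℝ := deriv (fun z => f R φ z) Z

/-- Joint smoothness (C^∞) of a scalar field. -/
def Smooth3 (f : F3) : Prop :=
  ContDiff ℝ (⊤ : ℕ∞) fun q : ℝ × ℝ × ℝ => f q.1 q.2.1 q.2.2

/-- Poisson bracket `[a,b] = ∂_R a ∂_Z b − ∂_Z a ∂_R b`. -/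
def pb (a b : F3) (R φ Z : ℝ) : ℝ :=
  dR a R φ Z * dZ b R φ Z - dZ a R φ Z * dR b R φ Z

/-- Grad–Shafranov operator `Δ* f = R ∂_R((1/R) ∂_R f) + ∂_ZZ f`. -/
def GS (f : F3) (R φ Z : ℝ) : ℝ :=
  R * dR (fun r a z => (1 / r) * dR f r a z) R φ Z + dZ (dZ f) R φ Z

/-- Poloidal Laplacian `Δ_pol f = (1/R) ∂_R(R ∂_R f) + ∂_ZZ f`. -/
def LapPol (f : F3) (R φ Z : ℝ) : ℝ :=
  (1 / R) * dR (fun r a z => r * dR f r a z) R φ Z + dZ (dZ f) R φ Z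

/-- Cylindrical divergence `∇·F = (1/R)∂_R(R F_R) + (1/R)∂_φ F_φ + ∂_Z F_Z`. -/
def divC (FR Fφ FZ : F3) (R φ Z : ℝ) : ℝ :=
  (1 / R) * dR (fun r a z => r * FR r a z) R φ Z + (1 / R) * dP Fφ R φ Z + dZ FZ R φ Z

/-- Scalar advection `X·∇f = X_R ∂_R f + (X_φ/R) ∂_φ f + X_Z ∂_Z f`. -/
def advS (XvR XvP XvZ f : F3) (R φ Z : ℝ) : ℝ :=
  XvR R φ Z * dR f R φ Z + XvP R φ Z / R * dP f R φ Z + XvZ R φ Z * dZ f R φ Z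

/-- `e_R`-component of the vector advection `X·∇Y`. -/
def advVR (XvR XvP XvZ YvR YvP YvZ : F3) (R φ Z : ℝ) : ℝ :=
  advS XvR XvP XvZ YvR R φ Z - XvP R φ Z * YvP R φ Z / R

/-- `e_φ`-component of the vector advection `X·∇Y`. -/
def advVP (XvR XvP XvZ YvR YvP YvZ : F3) (R φ Z : ℝ) : ℝ :=
  advS XvR XvP XvZ YvP R φ Z + XvP R φ Z * YvR R φ Z / R

/-- `e_Z`-component of the vector advection `X·∇Y`. -/
def advVZ (XvR XvP XvZ YvR YvP YvZ : F3) (R φ Z : ℝ) : ℝ :=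
  advS XvR XvP XvZ YvZ R φ Z

/-- `e_R`-component of `B = (1/R)∇ψ×e_φ + (F0/R)e_φ`. -/
def BR (ψ : F3) : F3 := fun R φ Z => (1 / R) * dZ ψ R φ Z

/-- `e_φ`-component of the magnetic field. -/
def BP (F0 : ℝ) : F3 := fun R _ _ => F0 / R

/-- `e_Z`-component of the magnetic field. -/
def BZ (ψ : F3) : F3 := fun R φ Z => -(1 / R) * dR ψ R φ Z

/-- `e_R`-component of `v_pol = −R∇u×e_φ`. -/
def vR (u : F3) : F3 := fun R φ Z => -R * dZ u R φ Z

/-- `e_Z`-component of `v_pol = −R∇u×e_φ`. -/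
def vZ (u : F3) : F3 := fun R φ Z => R * dR u R φ Z

/-- The zero field. -/
def zeroF : F3 := fun _ _ _ => 0

/-- `|B|² = (F0² + (∂_Rψ)² + (∂_Zψ)²)/R²`. -/
def B2 (F0 : ℝ) (ψ : F3) : F3 := fun R φ Z =>
  (F0 ^ 2 + (dR ψ R φ Z) ^ 2 + (dZ ψ R φ Z) ^ 2) / R ^ 2

/-- `|B_pol|² = ((∂_Rψ)² + (∂_Zψ)²)/R²`. -/
def Bpol2 (ψ : F3) : F3 := fun R φ Z => ((dR ψ R φ Z) ^ 2 + (dZ ψ R φ Z) ^ 2) / R ^ 2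

/-- `ρ̂ = R²ρ`. -/
def rh (ρ : F3) : F3 := fun R φ Z => R ^ 2 * ρ R φ Z

/-- `∇_pol a · ∇_pol b`. -/
def gdot (a b : F3) : F3 := fun R φ Z =>
  dR a R φ Z * dR b R φ Z + dZ a R φ Z * dZ b R φ Z

/-- `e_R`-component of `v∥ B`. -/
def XR (ψ vpar : F3) : F3 := fun R φ Z => vpar R φ Z * BR ψ R φ Z

/-- `e_φ`-component of `v∥ B`. -/
def XP (F0 : ℝ) (vpar : F3) : F3 := fun R φ Z => vpar R φ Z * BP F0 R φ Z

/-- `e_Z`-component of `v∥ B`. -/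
def XZ (ψ vpar : F3) : F3 := fun R φ Z => vpar R φ Z * BZ ψ R φ Z

/-- `e_R`-component of `J = ∇×B` (left-handed frame). -/
def JR (F0 : ℝ) (ψ : F3) : F3 := fun R φ Z =>
  dZ (BP F0) R φ Z - (1 / R) * dP (BZ ψ) R φ Z

/-- `e_φ`-component of `J = ∇×B`. -/
def JPc (ψ : F3) : F3 := fun R φ Z => dR (BZ ψ) R φ Z - dZ (BR ψ) R φ Z

/-- `e_Z`-component of `J = ∇×B`. -/
def JZc (F0 : ℝ) (ψ : F3) : F3 := fun R φ Z =>
  (1 / R) * dP (BR ψ) R φ Z - (1 / R) * dR (fun r a z => r * BP F0 r a z) R φ Z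

/-- `e_R`-component of `J × B`. -/
def KR (F0 : ℝ) (ψ : F3) : F3 := fun R φ Z =>
  JZc F0 ψ R φ Z * BP F0 R φ Z - JPc ψ R φ Z * BZ ψ R φ Z

/-- `e_Z`-component of `J × B`. -/
def KZ (F0 : ℝ) (ψ : F3) : F3 := fun R φ Z =>
  JPc ψ R φ Z * BR ψ R φ Z - JR F0 ψ R φ Z * BP F0 R φ Z


/-! ### Auxiliary machinery for partial derivatives on `ℝ × ℝ × ℝ` -/

/-- Directional partial derivative of a function on `ℝ³`. -/
def pdv (v : ℝ × ℝ × ℝ) (F : ℝ × ℝ × ℝ → ℝ) : ℝ × ℝ × ℝ → ℝ :=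
  fun q => fderiv ℝ F q v

lemma pdv_contDiff {F : ℝ × ℝ × ℝ → ℝ} (hF : ContDiff ℝ (⊤:ℕ∞) F) (v : ℝ × ℝ × ℝ) :
    ContDiff ℝ (⊤:ℕ∞) (pdv v F) :=
  (hF.fderiv_right (by norm_cast)).clm_apply contDiff_const

lemma hasDerivAt_R {F : ℝ × ℝ × ℝ → ℝ} (hF : ContDiff ℝ (⊤:ℕ∞) F) (R φ Z : ℝ) :
    HasDerivAt (fun r => F (r, φ, Z)) (pdv (1,0,0) F (R,φ,Z)) R := by
  have hc : HasDerivAt (fun r : ℝ => ((r, φ, Z) : ℝ×ℝ×ℝ)) (((1:ℝ),(0:ℝ),(0:ℝ))) R :=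
    (hasDerivAt_id R).prodMk ((hasDerivAt_const R φ).prodMk (hasDerivAt_const R Z))
  exact ((hF.differentiable (by norm_cast) (R,φ,Z)).hasFDerivAt).comp_hasDerivAt R hc

lemma hasDerivAt_P {F : ℝ × ℝ × ℝ → ℝ} (hF : ContDiff ℝ (⊤:ℕ∞) F) (R φ Z : ℝ) :
    HasDerivAt (fun a => F (R, a, Z)) (pdv (0,1,0) F (R,φ,Z)) φ := by
  have hc : HasDerivAt (fun a : ℝ => ((R, a, Z) : ℝ×ℝ×ℝ)) (((0:ℝ),(1:ℝ),(0:ℝ))) φ :=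
    (hasDerivAt_const φ R).prodMk ((hasDerivAt_id φ).prodMk (hasDerivAt_const φ Z))
  exact ((hF.differentiable (by norm_cast) (R,φ,Z)).hasFDerivAt).comp_hasDerivAt φ hc

lemma hasDerivAt_Z {F : ℝ × ℝ × ℝ → ℝ} (hF : ContDiff ℝ (⊤:ℕ∞) F) (R φ Z : ℝ) :
    HasDerivAt (fun z => F (R, φ, z)) (pdv (0,0,1) F (R,φ,Z)) Z := by
  have hc : HasDerivAt (fun z : ℝ => ((R, φ, z) : ℝ×ℝ×ℝ)) (((0:ℝ),(0:ℝ),(1:ℝ))) Z :=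
    (hasDerivAt_const Z R).prodMk ((hasDerivAt_const Z φ).prodMk (hasDerivAt_id Z))
  exact ((hF.differentiable (by norm_cast) (R,φ,Z)).hasFDerivAt).comp_hasDerivAt Z hc

lemma pdv_comm {F : ℝ × ℝ × ℝ → ℝ} (hF : ContDiff ℝ (⊤:ℕ∞) F) (v w q : ℝ × ℝ × ℝ) :
    pdv v (pdv w F) q = pdv w (pdv v F) q := by
  have hd : DifferentiableAt ℝ (fderiv ℝ F) q :=
      ((hF.fderiv_right (m := ((⊤:ℕ∞) : WithTop ℕ∞)) (by norm_cast)).differentiable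
        (by norm_cast)) q
  have hsymm := second_derivative_symmetric
    (fun y => (hF.differentiable (by norm_cast) y).hasFDerivAt) hd.hasFDerivAt v w
  have key : ∀ u z : ℝ × ℝ × ℝ, pdv u (pdv z F) q = fderiv ℝ (fderiv ℝ F) q u z := by
    intro u z
    show fderiv ℝ (fun x => pdv z F x) q u = _
    rw [show (fun x => pdv z F x) = (fun x => (fderiv ℝ F x) z) from rfl,
      fderiv_clm_apply hd (differentiableAt_const z)]
    simp
  rw [key, key]
  exact hsymm

/-- Uncurrying a field. -/
def unc (f : F3) : ℝ × ℝ × ℝ → ℝ := fun q => f q.1 q.2.1 q.2.2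

def Q1 (ψ : F3) : ℝ × ℝ × ℝ → ℝ := pdv (1,0,0) (unc ψ)
def Q3 (ψ : F3) : ℝ × ℝ × ℝ → ℝ := pdv (0,0,1) (unc ψ)
def Q11 (ψ : F3) : ℝ × ℝ × ℝ → ℝ := pdv (1,0,0) (Q1 ψ)
def Q12 (ψ : F3) : ℝ × ℝ × ℝ → ℝ := pdv (0,1,0) (Q1 ψ)
def Q13 (ψ : F3) : ℝ × ℝ × ℝ → ℝ := pdv (0,0,1) (Q1 ψ)
def Q31 (ψ : F3) : ℝ × ℝ × ℝ → ℝ := pdv (1,0,0) (Q3 ψ)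
def Q32 (ψ : F3) : ℝ × ℝ × ℝ → ℝ := pdv (0,1,0) (Q3 ψ)
def Q33 (ψ : F3) : ℝ × ℝ × ℝ → ℝ := pdv (0,0,1) (Q3 ψ)
def Q111 (ψ : F3) : ℝ × ℝ × ℝ → ℝ := pdv (1,0,0) (Q11 ψ)
def Q112 (ψ : F3) : ℝ × ℝ × ℝ → ℝ := pdv (0,1,0) (Q11 ψ)
def Q113 (ψ : F3) : ℝ × ℝ × ℝ → ℝ := pdv (0,0,1) (Q11 ψ)
def Q121 (ψ : F3) : ℝ × ℝ × ℝ → ℝ := pdv (1,0,0) (Q12 ψ)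
def Q323 (ψ : F3) : ℝ × ℝ × ℝ → ℝ := pdv (0,0,1) (Q32 ψ)
def Q331 (ψ : F3) : ℝ × ℝ × ℝ → ℝ := pdv (1,0,0) (Q33 ψ)
def Q332 (ψ : F3) : ℝ × ℝ × ℝ → ℝ := pdv (0,1,0) (Q33 ψ)
def Q333 (ψ : F3) : ℝ × ℝ × ℝ → ℝ := pdv (0,0,1) (Q33 ψ)

set_option maxHeartbeats 2000000 in
/-- `e_φ·∇×(R²(J×B)) = [ψ,j] − (F0/R)∂_φ j` with `j = Δ*ψ`. -/
theorem curl_phi_of_lorentz_force (F0 : ℝ) (ψ : F3) (hψ : Smooth3 ψ) :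
    ∀ R φ Z : ℝ, 0 < R →
      dR (fun r a z => r ^ 2 * KZ F0 ψ r a z) R φ Z
        - dZ (fun r a z => r ^ 2 * KR F0 ψ r a z) R φ Z
      = pb ψ (GS ψ) R φ Z - (F0 / R) * dP (GS ψ) R φ Z := by
  intro R φ Z hR
  have hs : ContDiff ℝ (⊤:ℕ∞) (unc ψ) := hψ
  have h1 : ContDiff ℝ (⊤:ℕ∞) (Q1 ψ) := pdv_contDiff hs _
  have h3 : ContDiff ℝ (⊤:ℕ∞) (Q3 ψ) := pdv_contDiff hs _
  have h11 : ContDiff ℝ (⊤:ℕ∞) (Q11 ψ) := pdv_contDiff h1 _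
  have h12 : ContDiff ℝ (⊤:ℕ∞) (Q12 ψ) := pdv_contDiff h1 _
  have h32 : ContDiff ℝ (⊤:ℕ∞) (Q32 ψ) := pdv_contDiff h3 _
  have h33 : ContDiff ℝ (⊤:ℕ∞) (Q33 ψ) := pdv_contDiff h3 _
  have hA1 : ∀ r a z : ℝ, dR ψ r a z = Q1 ψ (r,a,z) := fun r a z =>
    (hasDerivAt_R hs r a z).deriv
  have hA3 : ∀ r a z : ℝ, dZ ψ r a z = Q3 ψ (r,a,z) := fun r a z =>
    (hasDerivAt_Z hs r a z).deriv
  have q11 : pdv ((1:ℝ),(0:ℝ),(0:ℝ)) (Q1 ψ) = Q11 ψ := rfl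
  have q12 : pdv ((0:ℝ),(1:ℝ),(0:ℝ)) (Q1 ψ) = Q12 ψ := rfl
  have q13 : pdv ((0:ℝ),(0:ℝ),(1:ℝ)) (Q1 ψ) = Q13 ψ := rfl
  have q31 : pdv ((1:ℝ),(0:ℝ),(0:ℝ)) (Q3 ψ) = Q31 ψ := rfl
  have q33 : pdv ((0:ℝ),(0:ℝ),(1:ℝ)) (Q3 ψ) = Q33 ψ := rfl
  have q111 : pdv ((1:ℝ),(0:ℝ),(0:ℝ)) (Q11 ψ) = Q111 ψ := rfl
  have q112 : pdv ((0:ℝ),(1:ℝ),(0:ℝ)) (Q11 ψ) = Q112 ψ := rfl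
  have q113 : pdv ((0:ℝ),(0:ℝ),(1:ℝ)) (Q11 ψ) = Q113 ψ := rfl
  have q121 : pdv ((1:ℝ),(0:ℝ),(0:ℝ)) (Q12 ψ) = Q121 ψ := rfl
  have q323 : pdv ((0:ℝ),(0:ℝ),(1:ℝ)) (Q32 ψ) = Q323 ψ := rfl
  have q331 : pdv ((1:ℝ),(0:ℝ),(0:ℝ)) (Q33 ψ) = Q331 ψ := rfl
  have q332 : pdv ((0:ℝ),(1:ℝ),(0:ℝ)) (Q33 ψ) = Q332 ψ := rfl
  have q333 : pdv ((0:ℝ),(0:ℝ),(1:ℝ)) (Q33 ψ) = Q333 ψ := rfl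
  -- the φ-component of the current
  have hJPc : ∀ r a z : ℝ, r ≠ 0 → JPc ψ r a z =
      r⁻¹*(r⁻¹*Q1 ψ (r,a,z)) - r⁻¹*Q11 ψ (r,a,z) - r⁻¹*Q33 ψ (r,a,z) := by
    intro r a z hr
    have e1 : (fun s => BZ ψ s a z) = fun s => -(s⁻¹ * Q1 ψ (s,a,z)) := by
      funext s; simp [BZ, hA1, one_div, neg_mul]
    have d1 : HasDerivAt (fun s => -(s⁻¹ * Q1 ψ (s,a,z)))
        (-(-(r^2)⁻¹ * Q1 ψ (r,a,z) + r⁻¹ * Q11 ψ (r,a,z))) r :=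
      ((hasDerivAt_inv hr).mul (hasDerivAt_R h1 r a z)).neg
    have e2 : (fun z' => BR ψ r a z') = fun z' => r⁻¹ * Q3 ψ (r,a,z') := by
      funext z'; simp [BR, hA3, one_div]
    have d2 : HasDerivAt (fun z' => r⁻¹ * Q3 ψ (r,a,z')) (r⁻¹ * Q33 ψ (r,a,z)) z :=
      (hasDerivAt_Z h3 r a z).const_mul r⁻¹
    show deriv (fun s => BZ ψ s a z) r - deriv (fun z' => BR ψ r a z') z = _
    rw [e1, e2, d1.deriv, d2.deriv]
    field_simp
    ring
  -- the R-component of the current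
  have hJR : ∀ r a z : ℝ, JR F0 ψ r a z = r⁻¹ * (r⁻¹ * Q12 ψ (r,a,z)) := by
    intro r a z
    have e1 : (fun a' => BZ ψ r a' z) = fun a' => -(r⁻¹ * Q1 ψ (r,a',z)) := by
      funext a'; simp [BZ, hA1, one_div, neg_mul]
    have d1 : HasDerivAt (fun a' => -(r⁻¹ * Q1 ψ (r,a',z))) (-(r⁻¹ * Q12 ψ (r,a,z))) a :=
      ((hasDerivAt_P h1 r a z).const_mul r⁻¹).neg
    show deriv (fun z' => BP F0 r a z') z - 1 / r * deriv (fun a' => BZ ψ r a' z) a = _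
    rw [e1, d1.deriv, show (fun z' => BP F0 r a z') = fun _ => F0 / r from rfl,
      deriv_const]
    ring
  -- the Z-component of the current
  have hJZ : ∀ r a z : ℝ, r ≠ 0 → JZc F0 ψ r a z = r⁻¹ * (r⁻¹ * Q32 ψ (r,a,z)) := by
    intro r a z hr
    have e1 : (fun a' => BR ψ r a' z) = fun a' => r⁻¹ * Q3 ψ (r,a',z) := by
      funext a'; simp [BR, hA3, one_div]
    have d1 : HasDerivAt (fun a' => r⁻¹ * Q3 ψ (r,a',z)) (r⁻¹ * Q32 ψ (r,a,z)) a :=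
      (hasDerivAt_P h3 r a z).const_mul r⁻¹
    have e2 : (fun s => s * BP F0 s a z) = fun s => s * (F0 * s⁻¹) := by
      funext s; simp [BP, div_eq_mul_inv]
    have d2 : HasDerivAt (fun s => s * (F0 * s⁻¹))
        (1 * (F0 * r⁻¹) + r * (F0 * -(r^2)⁻¹)) r :=
      (hasDerivAt_id r).mul ((hasDerivAt_inv hr).const_mul F0)
    show 1 / r * deriv (fun a' => BR ψ r a' z) a
        - 1 / r * deriv (fun s => s * BP F0 s a z) r = _
    rw [e1, e2, d1.deriv, d2.deriv]
    field_simp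
    ring
  -- the Grad–Shafranov operator
  have hGS : ∀ r a z : ℝ, r ≠ 0 → GS ψ r a z =
      -(r⁻¹ * Q1 ψ (r,a,z)) + Q11 ψ (r,a,z) + Q33 ψ (r,a,z) := by
    intro r a z hr
    have e1 : (fun s => 1 / s * dR ψ s a z) = fun s => s⁻¹ * Q1 ψ (s,a,z) := by
      funext s; simp [hA1, one_div]
    have d1 : HasDerivAt (fun s => s⁻¹ * Q1 ψ (s,a,z))
        (-(r^2)⁻¹ * Q1 ψ (r,a,z) + r⁻¹ * Q11 ψ (r,a,z)) r :=
      (hasDerivAt_inv hr).mul (hasDerivAt_R h1 r a z)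
    have e2 : (fun z' => dZ ψ r a z') = fun z' => Q3 ψ (r,a,z') := by
      funext z'; simp [hA3]
    show r * deriv (fun s => 1 / s * dR ψ s a z) r + deriv (fun z' => dZ ψ r a z') z = _
    rw [e1, e2, d1.deriv, (hasDerivAt_Z h3 r a z).deriv, q33]
    field_simp
  -- the components of R² (J × B)
  have hKZv : ∀ r a z : ℝ, r ≠ 0 → r^2 * KZ F0 ψ r a z
      = r⁻¹ * (Q1 ψ (r,a,z) * Q3 ψ (r,a,z)) - Q11 ψ (r,a,z) * Q3 ψ (r,a,z)
        - Q33 ψ (r,a,z) * Q3 ψ (r,a,z) - F0 * r⁻¹ * Q12 ψ (r,a,z) := by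
    intro r a z hr
    have e : KZ F0 ψ r a z
        = JPc ψ r a z * (1/r * dZ ψ r a z) - JR F0 ψ r a z * (F0/r) := rfl
    rw [e, hJPc r a z hr, hJR r a z, hA3]
    field_simp
  have hKRv : ∀ r a z : ℝ, r ≠ 0 → r^2 * KR F0 ψ r a z
      = F0 * r⁻¹ * Q32 ψ (r,a,z) + r⁻¹ * (Q1 ψ (r,a,z) * Q1 ψ (r,a,z))
        - Q11 ψ (r,a,z) * Q1 ψ (r,a,z) - Q33 ψ (r,a,z) * Q1 ψ (r,a,z) := by
    intro r a z hr
    have e : KR F0 ψ r a z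
        = JZc F0 ψ r a z * (F0/r) - JPc ψ r a z * (-(1/r) * dR ψ r a z) := rfl
    rw [e, hJPc r a z hr, hJZ r a z hr, hA1]
    field_simp
    ring
  -- the two outer derivatives on the left-hand side
  have hT1 : dR (fun r a z => r ^ 2 * KZ F0 ψ r a z) R φ Z
      = -((R^2)⁻¹ * (Q1 ψ (R,φ,Z) * Q3 ψ (R,φ,Z))) + R⁻¹ * (Q11 ψ (R,φ,Z) * Q3 ψ (R,φ,Z))
        + R⁻¹ * (Q1 ψ (R,φ,Z) * Q31 ψ (R,φ,Z))
        - Q111 ψ (R,φ,Z) * Q3 ψ (R,φ,Z) - Q11 ψ (R,φ,Z) * Q31 ψ (R,φ,Z)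
        - Q331 ψ (R,φ,Z) * Q3 ψ (R,φ,Z) - Q33 ψ (R,φ,Z) * Q31 ψ (R,φ,Z)
        + F0 * (R^2)⁻¹ * Q12 ψ (R,φ,Z) - F0 * R⁻¹ * Q121 ψ (R,φ,Z) := by
    have hev : (fun r => r ^ 2 * KZ F0 ψ r φ Z) =ᶠ[nhds R]
        (fun r => r⁻¹ * (Q1 ψ (r,φ,Z) * Q3 ψ (r,φ,Z)) - Q11 ψ (r,φ,Z) * Q3 ψ (r,φ,Z)
          - Q33 ψ (r,φ,Z) * Q3 ψ (r,φ,Z) - F0 * r⁻¹ * Q12 ψ (r,φ,Z)) := by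
      filter_upwards [eventually_ne_nhds hR.ne'] with r hr
      exact hKZv r φ Z hr
    have hd := ((((hasDerivAt_inv hR.ne').mul
        ((hasDerivAt_R h1 R φ Z).mul (hasDerivAt_R h3 R φ Z))).sub
        ((hasDerivAt_R h11 R φ Z).mul (hasDerivAt_R h3 R φ Z))).sub
        ((hasDerivAt_R h33 R φ Z).mul (hasDerivAt_R h3 R φ Z))).sub
        (((hasDerivAt_inv hR.ne').const_mul F0).mul (hasDerivAt_R h12 R φ Z))
    refine (hev.deriv_eq.trans hd.deriv).trans ?_
    simp only [q11, q12, q13, q31, q33, q111, q112, q113, q121, q323, q331, q332, q333, Pi.mul_apply]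
    field_simp
    ring
  have hT2 : dZ (fun r a z => r ^ 2 * KR F0 ψ r a z) R φ Z
      = F0 * R⁻¹ * Q323 ψ (R,φ,Z) + 2 * R⁻¹ * (Q1 ψ (R,φ,Z) * Q13 ψ (R,φ,Z))
        - Q113 ψ (R,φ,Z) * Q1 ψ (R,φ,Z) - Q11 ψ (R,φ,Z) * Q13 ψ (R,φ,Z)
        - Q333 ψ (R,φ,Z) * Q1 ψ (R,φ,Z) - Q33 ψ (R,φ,Z) * Q13 ψ (R,φ,Z) := by
    have hfe : (fun z => R ^ 2 * KR F0 ψ R φ z)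
        = fun z => F0 * R⁻¹ * Q32 ψ (R,φ,z) + R⁻¹ * (Q1 ψ (R,φ,z) * Q1 ψ (R,φ,z))
          - Q11 ψ (R,φ,z) * Q1 ψ (R,φ,z) - Q33 ψ (R,φ,z) * Q1 ψ (R,φ,z) :=
      funext fun z => hKRv R φ z hR.ne'
    have hd := ((((hasDerivAt_Z h32 R φ Z).const_mul (F0 * R⁻¹)).add
        (((hasDerivAt_Z h1 R φ Z).mul (hasDerivAt_Z h1 R φ Z)).const_mul R⁻¹)).sub
        ((hasDerivAt_Z h11 R φ Z).mul (hasDerivAt_Z h1 R φ Z))).sub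
        ((hasDerivAt_Z h33 R φ Z).mul (hasDerivAt_Z h1 R φ Z))
    have : dZ (fun r a z => r ^ 2 * KR F0 ψ r a z) R φ Z
        = deriv (fun z => R ^ 2 * KR F0 ψ R φ z) Z := rfl
    rw [this, hfe]
    erw [hd.deriv]
    simp only [q11, q12, q13, q31, q33, q111, q112, q113, q121, q323, q331, q332, q333]
    ring
  -- derivatives of the Grad–Shafranov current
  have hGR : dR (GS ψ) R φ Z
      = (R^2)⁻¹ * Q1 ψ (R,φ,Z) - R⁻¹ * Q11 ψ (R,φ,Z) + Q111 ψ (R,φ,Z) + Q331 ψ (R,φ,Z) := by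
    have hev : (fun r => GS ψ r φ Z) =ᶠ[nhds R]
        (fun r => -(r⁻¹ * Q1 ψ (r,φ,Z)) + Q11 ψ (r,φ,Z) + Q33 ψ (r,φ,Z)) := by
      filter_upwards [eventually_ne_nhds hR.ne'] with r hr
      exact hGS r φ Z hr
    have hd := ((((hasDerivAt_inv hR.ne').mul (hasDerivAt_R h1 R φ Z)).neg.add
        (hasDerivAt_R h11 R φ Z)).add (hasDerivAt_R h33 R φ Z))
    refine (hev.deriv_eq.trans hd.deriv).trans ?_
    simp only [q11, q111, q331]
    field_simp
    ring
  have hGZ : dZ (GS ψ) R φ Z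
      = -(R⁻¹ * Q13 ψ (R,φ,Z)) + Q113 ψ (R,φ,Z) + Q333 ψ (R,φ,Z) := by
    have hfe : (fun z => GS ψ R φ z)
        = fun z => -(R⁻¹ * Q1 ψ (R,φ,z)) + Q11 ψ (R,φ,z) + Q33 ψ (R,φ,z) :=
      funext fun z => hGS R φ z hR.ne'
    have hd := ((((hasDerivAt_Z h1 R φ Z).const_mul R⁻¹).neg.add
        (hasDerivAt_Z h11 R φ Z)).add (hasDerivAt_Z h33 R φ Z))
    have : dZ (GS ψ) R φ Z = deriv (fun z => GS ψ R φ z) Z := rfl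
    rw [this, hfe]
    erw [hd.deriv]
    rw [q13, q113, q333]
  have hGP : dP (GS ψ) R φ Z
      = -(R⁻¹ * Q12 ψ (R,φ,Z)) + Q112 ψ (R,φ,Z) + Q332 ψ (R,φ,Z) := by
    have hfe : (fun a => GS ψ R a Z)
        = fun a => -(R⁻¹ * Q1 ψ (R,a,Z)) + Q11 ψ (R,a,Z) + Q33 ψ (R,a,Z) :=
      funext fun a => hGS R a Z hR.ne'
    have hd := ((((hasDerivAt_P h1 R φ Z).const_mul R⁻¹).neg.add
        (hasDerivAt_P h11 R φ Z)).add (hasDerivAt_P h33 R φ Z))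
    have : dP (GS ψ) R φ Z = deriv (fun a => GS ψ R a Z) φ := rfl
    rw [this, hfe]
    erw [hd.deriv]
    rw [q12, q112, q332]
  -- symmetry of second derivatives
  have hc1 : Q31 ψ (R,φ,Z) = Q13 ψ (R,φ,Z) := pdv_comm hs _ _ _
  have hc2 : Q121 ψ (R,φ,Z) = Q112 ψ (R,φ,Z) := pdv_comm h1 _ _ _
  have hc3 : Q323 ψ (R,φ,Z) = Q332 ψ (R,φ,Z) := pdv_comm h3 _ _ _
  -- put everything together
  rw [hT1, hT2, pb, hA1, hA3, hGZ, hGR, hGP, hc1, hc2, hc3]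
  field_simp
  ring
end
end

section
/- For smooth functions ρ,u on {R>0}×ℝ_φ×ℝ_Z, set ρ̂ := R²ρ, v_pol := (−R∂_Zu)e_R+(R∂_Ru)e_Z, and w := Δ_pol u. Then e_φ·∇×( ρ̂ (v_pol·∇v_pol) ) = −(1/2)[R²|∇_pol u|², ρ̂] − [R²ρ̂ w, u], where |∇_pol u|² := (∂_Ru)²+(∂_Zu)². -/
noncomputable section
set_option linter.unusedVariables false

open Real

/-! ### Auxiliary machinery -/

def Fq (f : F3) : ℝ × ℝ × ℝ → ℝ := fun q => f q.1 q.2.1 q.2.2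

lemma leW1 : (1:WithTop ℕ∞) ≤ ((⊤:ℕ∞):WithTop ℕ∞) := by exact_mod_cast le_top
lemma leW2 : (2:WithTop ℕ∞) ≤ ((⊤:ℕ∞):WithTop ℕ∞) :=
  le_trans (by norm_cast) (by exact_mod_cast le_top : ((2:ℕ∞):WithTop ℕ∞) ≤ ((⊤:ℕ∞):WithTop ℕ∞))
lemma leWS : ((⊤:ℕ∞):WithTop ℕ∞) + 1 ≤ ((⊤:ℕ∞):WithTop ℕ∞) := by exact_mod_cast le_top

section Aux
variable {f : F3} {R φ Z : ℝ}

lemma lineR_smooth (hf : Smooth3 f) (φ Z : ℝ) : ContDiff ℝ (⊤:ℕ∞) (fun r : ℝ => f r φ Z) :=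
  hf.comp ((contDiff_id.prodMk contDiff_const : ContDiff ℝ (⊤:ℕ∞) fun r : ℝ => (r, (φ, Z))))

lemma lineZ_smooth (hf : Smooth3 f) (R φ : ℝ) : ContDiff ℝ (⊤:ℕ∞) (fun z : ℝ => f R φ z) :=
  hf.comp ((contDiff_const.prodMk (contDiff_const.prodMk contDiff_id) : ContDiff ℝ (⊤:ℕ∞) fun z : ℝ => (R, (φ, z))))

lemma diffR (hf : Smooth3 f) : DifferentiableAt ℝ (fun r => f r φ Z) R :=
  ((lineR_smooth hf φ Z).differentiable (by simp)).differentiableAt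

lemma diffZ (hf : Smooth3 f) : DifferentiableAt ℝ (fun z => f R φ z) Z :=
  ((lineZ_smooth hf R φ).differentiable (by simp)).differentiableAt

lemma hasDR (hf : Smooth3 f) : HasDerivAt (fun r => f r φ Z) (dR f R φ Z) R :=
  (diffR hf).hasDerivAt

lemma hasDZ (hf : Smooth3 f) : HasDerivAt (fun z => f R φ z) (dZ f R φ Z) Z :=
  (diffZ hf).hasDerivAt

lemma hasCurve (hf : Smooth3 f) (γ : ℝ → ℝ×ℝ×ℝ) (γ' : ℝ×ℝ×ℝ) (t : ℝ)
    (hγ : HasDerivAt γ γ' t) :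
    HasDerivAt (fun s => Fq f (γ s)) (fderiv ℝ (Fq f) (γ t) γ') t :=
  ((hf.differentiable (by simp)).differentiableAt.hasFDerivAt).comp_hasDerivAt t hγ

lemma dR_eq_fderiv (hf : Smooth3 f) :
    dR f R φ Z = fderiv ℝ (Fq f) (R, φ, Z) (1, 0, 0) := by
  have h := hasCurve hf (fun r => (r, φ, Z)) (1, 0, 0) R
    (((hasDerivAt_id R).prodMk (hasDerivAt_const _ _)))
  exact h.deriv

lemma dZ_eq_fderiv (hf : Smooth3 f) :
    dZ f R φ Z = fderiv ℝ (Fq f) (R, φ, Z) (0, 0, 1) := by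
  have h := hasCurve hf (fun z => (R, φ, z)) (0, 0, 1) Z
    ((hasDerivAt_const _ _).prodMk ((hasDerivAt_const _ _).prodMk (hasDerivAt_id Z)))
  exact h.deriv

lemma smooth_fderiv_apply (hf : Smooth3 f) (v : ℝ×ℝ×ℝ) :
    ContDiff ℝ (⊤:ℕ∞) (fun q => fderiv ℝ (Fq f) q v) :=
  (hf.fderiv_right (m := ((⊤:ℕ∞):WithTop ℕ∞)) leWS).clm_apply contDiff_const

lemma smooth_dR (hf : Smooth3 f) : Smooth3 (dR f) := by
  have : (fun q : ℝ×ℝ×ℝ => dR f q.1 q.2.1 q.2.2)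
      = fun q => fderiv ℝ (Fq f) q (1,0,0) := by
    funext q; exact dR_eq_fderiv hf
  rw [Smooth3, this]; exact smooth_fderiv_apply hf _

lemma smooth_dZ (hf : Smooth3 f) : Smooth3 (dZ f) := by
  have : (fun q : ℝ×ℝ×ℝ => dZ f q.1 q.2.1 q.2.2)
      = fun q => fderiv ℝ (Fq f) q (0,0,1) := by
    funext q; exact dZ_eq_fderiv hf
  rw [Smooth3, this]; exact smooth_fderiv_apply hf _

lemma clairaut (hf : Smooth3 f) : dR (dZ f) R φ Z = dZ (dR f) R φ Z := by
  have hsym : IsSymmSndFDerivAt ℝ (Fq f) (R, φ, Z) :=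
    hf.contDiffAt.isSymmSndFDerivAt (by simpa using leW2)
  have hd : DifferentiableAt ℝ (fderiv ℝ (Fq f)) (R, φ, Z) :=
    ((hf.fderiv_right (m := ((⊤:ℕ∞):WithTop ℕ∞)) leWS).differentiable (by simp)).differentiableAt
  have h1 : dR (dZ f) R φ Z = fderiv ℝ (fderiv ℝ (Fq f)) (R,φ,Z) (1,0,0) (0,0,1) := by
    rw [dR_eq_fderiv (smooth_dZ hf)]
    have he : Fq (dZ f) = fun q => fderiv ℝ (Fq f) q (0,0,1) := by
      funext q; exact dZ_eq_fderiv hf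
    rw [he, fderiv_clm_apply hd (differentiableAt_const _)]
    simp
  have h2 : dZ (dR f) R φ Z = fderiv ℝ (fderiv ℝ (Fq f)) (R,φ,Z) (0,0,1) (1,0,0) := by
    rw [dZ_eq_fderiv (smooth_dR hf)]
    have he : Fq (dR f) = fun q => fderiv ℝ (Fq f) q (1,0,0) := by
      funext q; exact dR_eq_fderiv hf
    rw [he, fderiv_clm_apply hd (differentiableAt_const _)]
    simp
  rw [h1, h2]; exact hsym _ _

end Aux

lemma hasDerivAt_congr_val {f : ℝ → ℝ} {v w x : ℝ} (h : HasDerivAt f v x) (e : v = w) :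
    HasDerivAt f w x := e ▸ h

/-- `e_φ·∇×(ρ̂ (v_pol·∇v_pol)) = −½[R²|∇_pol u|², ρ̂] − [R²ρ̂ w, u]`. -/
theorem curl_phi_of_poloidal_advection (ρ u : F3) (hρ : Smooth3 ρ) (hu : Smooth3 u) :
    ∀ R φ Z : ℝ, 0 < R →
      dR (fun r a z => rh ρ r a z * advVZ (vR u) zeroF (vZ u) (vR u) zeroF (vZ u) r a z) R φ Z
        - dZ (fun r a z => rh ρ r a z * advVR (vR u) zeroF (vZ u) (vR u) zeroF (vZ u) r a z) R φ Z
      = -(1 / 2) * pb (fun r a z => r ^ 2 * gdot u u r a z) (rh ρ) R φ Z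
        - pb (fun r a z => r ^ 2 * rh ρ r a z * LapPol u r a z) u R φ Z := by
 intro R φ Z hR
 have hR0 : R ≠ 0 := ne_of_gt hR
 have hu1R : Smooth3 (dR u) := smooth_dR hu
 have hu1Z : Smooth3 (dZ u) := smooth_dZ hu
 have hu2RR : Smooth3 (dR (dR u)) := smooth_dR hu1R
 have hu2RZ : Smooth3 (dZ (dR u)) := smooth_dZ hu1R
 have hu2ZZ : Smooth3 (dZ (dZ u)) := smooth_dZ hu1Z
 have DRf : ∀ {g : F3}, Smooth3 g → HasDerivAt (fun r => g r φ Z) (dR g R φ Z) R :=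
  fun hg => hasDR hg
 have DZf : ∀ {g : F3}, Smooth3 g → HasDerivAt (fun z => g R φ z) (dZ g R φ Z) Z :=
  fun hg => hasDZ hg
 -- pointwise derivatives of the poloidal velocity components
 have hA1 : ∀ r a z : ℝ, dR (fun R φ Z => R * dR u R φ Z) r a z
   = 1 * dR u r a z + r * dR (dR u) r a z :=
  fun r a z => ((hasDerivAt_id' r).mul (hasDR hu1R)).deriv
 have hA2 : ∀ r a z : ℝ, dZ (fun R φ Z => R * dR u R φ Z) r a z = r * dZ (dR u) r a z :=
  fun r a z => (HasDerivAt.const_mul r (hasDZ hu1R)).deriv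
 have hA3 : ∀ r a z : ℝ, dR (fun R φ Z => -R * dZ u R φ Z) r a z
   = -1 * dZ u r a z + -r * dR (dZ u) r a z :=
  fun r a z => (((hasDerivAt_id' r).neg).mul (hasDR hu1Z)).deriv
 have hA4 : ∀ r a z : ℝ, dZ (fun R φ Z => -R * dZ u R φ Z) r a z = -r * dZ (dZ u) r a z :=
  fun r a z => (HasDerivAt.const_mul (-r) (hasDZ hu1Z)).deriv
 have hA1v : ∀ r a z : ℝ, dR (vZ u) r a z = 1 * dR u r a z + r * dR (dR u) r a z :=
  fun r a z => hA1 r a z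
 have hA2v : ∀ r a z : ℝ, dZ (vZ u) r a z = r * dZ (dR u) r a z :=
  fun r a z => hA2 r a z
 have hA3v : ∀ r a z : ℝ, dR (vR u) r a z = -1 * dZ u r a z + -r * dR (dZ u) r a z :=
  fun r a z => hA3 r a z
 have hA4v : ∀ r a z : ℝ, dZ (vR u) r a z = -r * dZ (dZ u) r a z :=
  fun r a z => hA4 r a z
 -- function-level simplifications
 have hF1 : (fun r a z => rh ρ r a z * advVZ (vR u) zeroF (vZ u) (vR u) zeroF (vZ u) r a z)
   = (fun r a z => r ^ 2 * ρ r a z * (-(r * dZ u r a z) * (dR u r a z + r * dR (dR u) r a z) + r * dR u r a z * (r * dZ (dR u) r a z))) := by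
  funext r a z
  simp only [rh, advVZ, advS, vR, vZ, zeroF]
  rw [hA1v, hA2v]
  ring
 have hF2 : (fun r a z => rh ρ r a z * advVR (vR u) zeroF (vZ u) (vR u) zeroF (vZ u) r a z)
   = (fun r a z => r ^ 2 * ρ r a z * (r * dZ u r a z * (dZ u r a z + r * dZ (dR u) r a z) - r * dR u r a z * (r * dZ (dZ u) r a z))) := by
  funext r a z
  simp only [advVR, advS, rh, vR, vZ, zeroF]
  rw [hA3v, hA4v, clairaut hu]
  ring
 have hF4 : (fun r a z => r ^ 2 * rh ρ r a z * LapPol u r a z)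
   = (fun r a z => r ^ 2 * (r ^ 2 * ρ r a z) * (1 / r * (dR u r a z + r * dR (dR u) r a z) + dZ (dZ u) r a z)) := by
  funext r a z
  simp only [rh, LapPol]
  rw [hA1]
  ring
 -- the eight explicit derivatives
 have H1 : HasDerivAt (fun r => r ^ 2 * ρ r φ Z * (-(r * dZ u r φ Z) * (dR u r φ Z + r * dR (dR u) r φ Z) + r * dR u r φ Z * (r * dZ (dR u) r φ Z))) ((2 * R * (ρ R φ Z) + R ^ 2 * (dR ρ R φ Z)) * (-(R * (dZ u R φ Z)) * ((dR u R φ Z) + R * (dR (dR u) R φ Z)) + R * (dR u R φ Z) * (R * (dZ (dR u) R φ Z))) + R ^ 2 * (ρ R φ Z) * (-(((dZ u R φ Z) + R * (dR (dZ u) R φ Z)) * ((dR u R φ Z) + R * (dR (dR u) R φ Z)) + (R * (dZ u R φ Z)) * ((dR (dR u) R φ Z) + ((dR (dR u) R φ Z) + R * (dR (dR (dR u)) R φ Z)))) + (((dR u R φ Z) + R * (dR (dR u) R φ Z)) * (R * (dZ (dR u) R φ Z)) + (R * (dR u R φ Z)) * ((dZ (dR u) R φ Z) + R * (dR (dZ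 (dR u)) R φ Z))))) R :=
  hasDerivAt_congr_val
   (((hasDerivAt_pow 2 R).mul (DRf hρ)).mul
    (((((hasDerivAt_id' R).mul (DRf hu1Z)).neg).mul
      ((DRf hu1R).add ((hasDerivAt_id' R).mul (DRf hu2RR)))).add
     (((hasDerivAt_id' R).mul (DRf hu1R)).mul ((hasDerivAt_id' R).mul (DRf hu2RZ)))))
   (by simp only [Pi.mul_apply, Pi.add_apply, Pi.neg_apply, Pi.sub_apply]; push_cast; ring)
 have e1 : dR (fun r a z => r ^ 2 * ρ r a z * (-(r * dZ u r a z) * (dR u r a z + r * dR (dR u) r a z) + r * dR u r a z * (r * dZ (dR u) r a z))) R φ Z = (2 * R * (ρ R φ Z) + R ^ 2 * (dR ρ R φ Z)) * (-(R * (dZ u R φ Z)) * ((dR u R φ Z) + R * (dR (dR u) R φ Z)) + R * (dR u R φ Z) * (R * (dZ (dR u) R φ Z))) + R ^ 2 * (ρ R φ Z) * (-(((dZ u R φ Z) + R * (dR (dZ u) R φ Z)) * ((dR u R φ Z) + R * (dR (dR u) R φ Z)) + (R * (dZ u R φ Z)) * ((dR (dR u) R φ Z) + ((dR (dR u) R φ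 Z) + R * (dR (dR (dR u)) R φ Z)))) + (((dR u R φ Z) + R * (dR (dR u) R φ Z)) * (R * (dZ (dR u) R φ Z)) + (R * (dR u R φ Z)) * ((dZ (dR u) R φ Z) + R * (dR (dZ (dR u)) R φ Z)))) := H1.deriv
 have H2 : HasDerivAt (fun z => R ^ 2 * ρ R φ z * (R * dZ u R φ z * (dZ u R φ z + R * dZ (dR u) R φ z) - R * dR u R φ z * (R * dZ (dZ u) R φ z))) (R ^ 2 * (dZ ρ R φ Z) * (R * (dZ u R φ Z) * ((dZ u R φ Z) + R * (dZ (dR u) R φ Z)) - R * (dR u R φ Z) * (R * (dZ (dZ u) R φ Z))) + R ^ 2 * (ρ R φ Z) * ((R * (dZ (dZ u) R φ Z)) * ((dZ u R φ Z) + R * (dZ (dR u) R φ Z)) + (R * (dZ u R φ Z)) * ((dZ (dZ u) R φ Z) + R * (dZ (dZ (dR u)) R φ Z)) - ((R * (dZ (dR u) R φ Z)) * (R * (dZ (dZ u) R φ Z)) + (R * (dR u R φ Z)) * (R * (dZ (dZ (dZ u)) R φ Z))))) Z :=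
  hasDerivAt_congr_val
   ((HasDerivAt.const_mul (R ^ 2) (DZf hρ)).mul
    (((HasDerivAt.const_mul R (DZf hu1Z)).mul
      ((DZf hu1Z).add (HasDerivAt.const_mul R (DZf hu2RZ)))).sub
     ((HasDerivAt.const_mul R (DZf hu1R)).mul (HasDerivAt.const_mul R (DZf hu2ZZ)))))
   (by simp only [Pi.mul_apply, Pi.add_apply, Pi.neg_apply, Pi.sub_apply])
 have e2 : dZ (fun r a z => r ^ 2 * ρ r a z * (r * dZ u r a z * (dZ u r a z + r * dZ (dR u) r a z) - r * dR u r a z * (r * dZ (dZ u) r a z))) R φ Z = R ^ 2 * (dZ ρ R φ Z) * (R * (dZ u R φ Z) * ((dZ u R φ Z) + R * (dZ (dR u) R φ Z)) - R * (dR u R φ Z) * (R * (dZ (dZ u) R φ Z))) + R ^ 2 * (ρ R φ Z) * ((R * (dZ (dZ u) R φ Z)) * ((dZ u R φ Z) + R * (dZ (dR u) R φ Z)) + (R * (dZ u R φ Z)) * ((dZ (dZ u) R φ Z) + R * (dZ (dZ (dR u)) R φ Z)) - ((R * (dZ (dR u) R φ Z)) * (R * (dZ (dZ u) R φ Z)) +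 (R * (dR u R φ Z)) * (R * (dZ (dZ (dZ u)) R φ Z)))) := H2.deriv
 have H3 : HasDerivAt (fun r => r ^ 2 * (dR u r φ Z * dR u r φ Z + dZ u r φ Z * dZ u r φ Z)) (2 * R * ((dR u R φ Z) * (dR u R φ Z) + (dZ u R φ Z) * (dZ u R φ Z)) + R ^ 2 * ((dR (dR u) R φ Z) * (dR u R φ Z) + (dR u R φ Z) * (dR (dR u) R φ Z) + (dR (dZ u) R φ Z) * (dZ u R φ Z) + (dZ u R φ Z) * (dR (dZ u) R φ Z))) R :=
  hasDerivAt_congr_val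
   ((hasDerivAt_pow 2 R).mul
    (((DRf hu1R).mul (DRf hu1R)).add ((DRf hu1Z).mul (DRf hu1Z))))
   (by push_cast; ring)
 have e3 : dR (fun r a z => r ^ 2 * gdot u u r a z) R φ Z = 2 * R * ((dR u R φ Z) * (dR u R φ Z) + (dZ u R φ Z) * (dZ u R φ Z)) + R ^ 2 * ((dR (dR u) R φ Z) * (dR u R φ Z) + (dR u R φ Z) * (dR (dR u) R φ Z) + (dR (dZ u) R φ Z) * (dZ u R φ Z) + (dZ u R φ Z) * (dR (dZ u) R φ Z)) := H3.deriv
 have H4 : HasDerivAt (fun z => R ^ 2 * (dR u R φ z * dR u R φ z + dZ u R φ z * dZ u R φ z)) (R ^ 2 * ((dZ (dR u) R φ Z) * (dR u R φ Z) + (dR u R φ Z) * (dZ (dR u) R φ Z) + (dZ (dZ u) R φ Z) * (dZ u R φ Z) + (dZ u R φ Z) * (dZ (dZ u) R φ Z))) Z :=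
  hasDerivAt_congr_val
   (HasDerivAt.const_mul (R ^ 2)
    (((DZf hu1R).mul (DZf hu1R)).add ((DZf hu1Z).mul (DZf hu1Z))))
   (by push_cast; ring)
 have e4 : dZ (fun r a z => r ^ 2 * gdot u u r a z) R φ Z = R ^ 2 * ((dZ (dR u) R φ Z) * (dR u R φ Z) + (dR u R φ Z) * (dZ (dR u) R φ Z) + (dZ (dZ u) R φ Z) * (dZ u R φ Z) + (dZ u R φ Z) * (dZ (dZ u) R φ Z)) := H4.deriv
 have H5 : HasDerivAt (fun r => r ^ 2 * ρ r φ Z) (2 * R * (ρ R φ Z) + R ^ 2 * (dR ρ R φ Z)) R :=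
  hasDerivAt_congr_val ((hasDerivAt_pow 2 R).mul (DRf hρ)) (by push_cast; ring)
 have e5 : dR (rh ρ) R φ Z = 2 * R * (ρ R φ Z) + R ^ 2 * (dR ρ R φ Z) := H5.deriv
 have H6 : HasDerivAt (fun z => R ^ 2 * ρ R φ z) (R ^ 2 * (dZ ρ R φ Z)) Z :=
  hasDerivAt_congr_val (HasDerivAt.const_mul (R ^ 2) (DZf hρ)) (by push_cast; ring)
 have e6 : dZ (rh ρ) R φ Z = R ^ 2 * (dZ ρ R φ Z) := H6.deriv
 have hev : (fun r => r ^ 2 * (r ^ 2 * ρ r φ Z) * (1 / r * (dR u r φ Z + r * dR (dR u) r φ Z) + dZ (dZ u) r φ Z)) =ᶠ[nhds R] (fun r => r ^ 3 * ρ r φ Z * dR u r φ Z + r ^ 4 * ρ r φ Z * dR (dR u) r φ Z + r ^ 4 * ρ r φ Z * dZ (dZ u) r φ Z) := by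
  filter_upwards [eventually_ne_nhds hR0] with r hr
  field_simp
 have H7 : HasDerivAt (fun r => r ^ 3 * ρ r φ Z * dR u r φ Z + r ^ 4 * ρ r φ Z * dR (dR u) r φ Z + r ^ 4 * ρ r φ Z * dZ (dZ u) r φ Z) ((3 * R ^ 2 * (ρ R φ Z) + R ^ 3 * (dR ρ R φ Z)) * (dR u R φ Z) + R ^ 3 * (ρ R φ Z) * (dR (dR u) R φ Z) + (4 * R ^ 3 * (ρ R φ Z) + R ^ 4 * (dR ρ R φ Z)) * (dR (dR u) R φ Z) + R ^ 4 * (ρ R φ Z) * (dR (dR (dR u)) R φ Z) + (4 * R ^ 3 * (ρ R φ Z) + R ^ 4 * (dR ρ R φ Z)) * (dZ (dZ u) R φ Z) + R ^ 4 * (ρ R φ Z) * (dR (dZ (dZ u)) R φ Z)) R :=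
  hasDerivAt_congr_val
   (((((hasDerivAt_pow 3 R).mul (DRf hρ)).mul (DRf hu1R)).add
     (((hasDerivAt_pow 4 R).mul (DRf hρ)).mul (DRf hu2RR))).add
    (((hasDerivAt_pow 4 R).mul (DRf hρ)).mul (DRf hu2ZZ)))
   (by simp only [Pi.mul_apply, Pi.add_apply, Pi.neg_apply, Pi.sub_apply]; push_cast; ring)
 have e7 : dR (fun r a z => r ^ 2 * (r ^ 2 * ρ r a z) * (1 / r * (dR u r a z + r * dR (dR u) r a z) + dZ (dZ u) r a z)) R φ Z = (3 * R ^ 2 * (ρ R φ Z) + R ^ 3 * (dR ρ R φ Z)) * (dR u R φ Z) + R ^ 3 * (ρ R φ Z) * (dR (dR u) R φ Z) + (4 * R ^ 3 * (ρ R φ Z) + R ^ 4 * (dR ρ R φ Z)) * (dR (dR u) R φ Z) + R ^ 4 * (ρ R φ Z) * (dR (dR (dR u)) R φ Z) + (4 * R ^ 3 * (ρ R φ Z) + R ^ 4 * (dR ρ R φ Z)) * (dZ (dZ u) R φ Z) + R ^ 4 * (ρ R φ Z) * (dR (dZ (dZ u)) R φ Z) := hev.deriv_eq.trans H7.deriv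
 have H8 : HasDerivAt (fun z => R ^ 2 * (R ^ 2 * ρ R φ z) * (1 / R * (dR u R φ z + R * dR (dR u) R φ z) + dZ (dZ u) R φ z)) (R ^ 2 * (R ^ 2 * (dZ ρ R φ Z)) * ((1/R) * ((dR u R φ Z) + R * (dR (dR u) R φ Z)) + (dZ (dZ u) R φ Z)) + R ^ 2 * (R ^ 2 * (ρ R φ Z)) * ((1/R) * ((dZ (dR u) R φ Z) + R * (dZ (dR (dR u)) R φ Z)) + (dZ (dZ (dZ u)) R φ Z))) Z :=
  hasDerivAt_congr_val
   ((HasDerivAt.const_mul (R ^ 2) (HasDerivAt.const_mul (R ^ 2) (DZf hρ))).mul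
    (((HasDerivAt.const_mul (1 / R)
      ((DZf hu1R).add (HasDerivAt.const_mul R (DZf hu2RR))))).add
     (DZf hu2ZZ)))
   (by push_cast; ring)
 have e8 : dZ (fun r a z => r ^ 2 * (r ^ 2 * ρ r a z) * (1 / r * (dR u r a z + r * dR (dR u) r a z) + dZ (dZ u) r a z)) R φ Z = R ^ 2 * (R ^ 2 * (dZ ρ R φ Z)) * ((1/R) * ((dR u R φ Z) + R * (dR (dR u) R φ Z)) + (dZ (dZ u) R φ Z)) + R ^ 2 * (R ^ 2 * (ρ R φ Z)) * ((1/R) * ((dZ (dR u) R φ Z) + R * (dZ (dR (dR u)) R φ Z)) + (dZ (dZ (dZ u)) R φ Z)) := H8.deriv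
 -- Clairaut normalizations at the point
 have c1 : dR (dZ u) R φ Z = dZ (dR u) R φ Z := clairaut hu
 have c2 : dR (dZ (dR u)) R φ Z = dZ (dR (dR u)) R φ Z := clairaut hu1R
 have hswap : dR (dZ u) = dZ (dR u) := by
  funext x y w; exact clairaut hu
 have c3 : dR (dZ (dZ u)) R φ Z = dZ (dZ (dR u)) R φ Z := by
  rw [clairaut hu1Z, hswap]
 rw [hF1, hF2]
 simp only [pb]
 rw [hF4]
 rw [e1, e2, e3, e4, e5, e6, e7, e8, c1, c2, c3]
 field_simp
 ring
end
end

section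
/- Let F0∈ℝ and let ψ,v∥,ρ be smooth on {R>0}×ℝ_φ×ℝ_Z. Set B := ((1/R)∂_Zψ)e_R+(F0/R)e_φ+(−(1/R)∂_Rψ)e_Z, ρ̂ := R²ρ, j := Δ*ψ, |B_pol|² := ((∂_Rψ)²+(∂_Zψ)²)/R². Then e_φ·∇×( R²ρ ((v∥B)·∇(v∥B)) ) = −[ρv∥²j, ψ] − [ρv∥(∇_pol v∥·∇_polψ), ψ] + (1/2)[ρ̂, v∥²|B_pol|²] − ∂_Z( ρ̂ (F0/R³) v∥ ∂_φ(v∥∂_Zψ) ) − ∂_R( ρ̂ (F0/R³) v∥ ∂_φ(v∥∂_Rψ) ) + ∂_Z( ρ̂ (F0²/R³) v∥² ), where ∇_pol a·∇_pol b := ∂_Ra∂_Rb+∂_Za∂_Zb. -/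
noncomputable section
set_option linter.unusedVariables false

open Real

namespace Helper

def U (f : F3) : ℝ × ℝ × ℝ → ℝ := fun q => f q.1 q.2.1 q.2.2
def Spos : Set (ℝ × ℝ × ℝ) := {q | 0 < q.1}
def SmoothP (f : F3) : Prop := ContDiffOn ℝ (⊤ : ℕ∞) (U f) Spos

lemma isOpen_Spos : IsOpen Spos := isOpen_lt continuous_const continuous_fst

lemma Smooth3.smoothP {f : F3} (hf : Smooth3 f) : SmoothP f := hf.contDiffOn

variable {f g : F3} {R φ Z : ℝ}

lemma mem_Spos (h : 0 < R) : ((R, φ, Z) : ℝ × ℝ × ℝ) ∈ Spos := h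

lemma SmoothP.contDiffAt (hf : SmoothP f) (h : 0 < R) :
    ContDiffAt ℝ (⊤ : ℕ∞) (U f) (R, φ, Z) :=
  (hf _ (mem_Spos h)).contDiffAt (isOpen_Spos.mem_nhds (mem_Spos h))

lemma hasDerivAt_lineR (φ Z R : ℝ) :
    HasDerivAt (fun r : ℝ => ((r, φ, Z) : ℝ × ℝ × ℝ)) (1, 0, 0) R :=
  (hasDerivAt_id R).prodMk ((hasDerivAt_const R φ).prodMk (hasDerivAt_const R Z))

lemma hasDerivAt_lineP (R Z φ : ℝ) :
    HasDerivAt (fun a : ℝ => ((R, a, Z) : ℝ × ℝ × ℝ)) (0, 1, 0) φ :=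
  (hasDerivAt_const φ R).prodMk ((hasDerivAt_id φ).prodMk (hasDerivAt_const φ Z))

lemma hasDerivAt_lineZ (R φ Z : ℝ) :
    HasDerivAt (fun z : ℝ => ((R, φ, z) : ℝ × ℝ × ℝ)) (0, 0, 1) Z :=
  (hasDerivAt_const Z R).prodMk ((hasDerivAt_const Z φ).prodMk (hasDerivAt_id Z))

lemma SmoothP.hasFDerivAt (hf : SmoothP f) (h : 0 < R) :
    HasFDerivAt (U f) (fderiv ℝ (U f) (R, φ, Z)) (R, φ, Z) :=
  ((hf.contDiffAt h).differentiableAt (by simp)).hasFDerivAt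

lemma SmoothP.hasDerivAt_R (hf : SmoothP f) (h : 0 < R) :
    HasDerivAt (fun r => f r φ Z) (fderiv ℝ (U f) (R, φ, Z) (1, 0, 0)) R :=
  by have := (hf.hasFDerivAt h).comp_hasDerivAt R (hasDerivAt_lineR φ Z R); exact this

lemma SmoothP.hasDerivAt_P (hf : SmoothP f) (h : 0 < R) :
    HasDerivAt (fun a => f R a Z) (fderiv ℝ (U f) (R, φ, Z) (0, 1, 0)) φ :=
  by have := (hf.hasFDerivAt h).comp_hasDerivAt φ (hasDerivAt_lineP R Z φ); exact this

lemma SmoothP.hasDerivAt_Z (hf : SmoothP f) (h : 0 < R) :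
    HasDerivAt (fun z => f R φ z) (fderiv ℝ (U f) (R, φ, Z) (0, 0, 1)) Z :=
  by have := (hf.hasFDerivAt h).comp_hasDerivAt Z (hasDerivAt_lineZ R φ Z); exact this

lemma SmoothP.diffR (hf : SmoothP f) (h : 0 < R) :
    DifferentiableAt ℝ (fun r => f r φ Z) R := (hf.hasDerivAt_R h).differentiableAt
lemma SmoothP.diffP (hf : SmoothP f) (h : 0 < R) :
    DifferentiableAt ℝ (fun a => f R a Z) φ := (hf.hasDerivAt_P h).differentiableAt
lemma SmoothP.diffZ (hf : SmoothP f) (h : 0 < R) :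
    DifferentiableAt ℝ (fun z => f R φ z) Z := (hf.hasDerivAt_Z h).differentiableAt

lemma dR_eqf (hf : SmoothP f) (h : 0 < R) :
    dR f R φ Z = fderiv ℝ (U f) (R, φ, Z) (1, 0, 0) := (hf.hasDerivAt_R h).deriv
lemma dP_eqf (hf : SmoothP f) (h : 0 < R) :
    dP f R φ Z = fderiv ℝ (U f) (R, φ, Z) (0, 1, 0) := (hf.hasDerivAt_P h).deriv
lemma dZ_eqf (hf : SmoothP f) (h : 0 < R) :
    dZ f R φ Z = fderiv ℝ (U f) (R, φ, Z) (0, 0, 1) := (hf.hasDerivAt_Z h).deriv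

end Helper

namespace Helper
variable {f g : F3} {R φ Z : ℝ}

/-! ### SmoothP closure -/

lemma smoothP_mul (hf : SmoothP f) (hg : SmoothP g) :
    SmoothP (fun r a z => f r a z * g r a z) := ContDiffOn.mul hf hg

lemma smoothP_add (hf : SmoothP f) (hg : SmoothP g) :
    SmoothP (fun r a z => f r a z + g r a z) := ContDiffOn.add hf hg

lemma smoothP_sub (hf : SmoothP f) (hg : SmoothP g) :
    SmoothP (fun r a z => f r a z - g r a z) := ContDiffOn.sub hf hg

lemma smoothP_neg (hf : SmoothP f) :
    SmoothP (fun r a z => -(f r a z)) := ContDiffOn.neg hf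

lemma smoothP_pow (hf : SmoothP f) (n : ℕ) :
    SmoothP (fun r a z => f r a z ^ n) := ContDiffOn.pow hf n

lemma smoothP_const {c : ℝ} : SmoothP (fun _ _ _ => c) := contDiffOn_const

lemma smoothP_r : SmoothP (fun r _ _ => r) := contDiff_fst.contDiffOn

lemma smoothP_inv : SmoothP (fun r _ _ => r⁻¹) := by
  apply ContDiffOn.inv (contDiff_fst.contDiffOn)
  exact fun q hq => ne_of_gt hq

lemma smoothP_invpow {n : ℕ} : SmoothP (fun r _ _ => (r ^ n)⁻¹) := by
  apply ContDiffOn.inv (ContDiffOn.pow contDiff_fst.contDiffOn n)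
  exact fun q hq => pow_ne_zero _ (ne_of_gt hq)

lemma smoothP_dR (hf : SmoothP f) : SmoothP (dR f) := by
  have h1 : ContDiffOn ℝ (⊤ : ℕ∞) (fun q => fderiv ℝ (U f) q (1, 0, 0)) Spos := by
    apply ContDiffOn.clm_apply _ contDiffOn_const
    exact hf.fderiv_of_isOpen isOpen_Spos (by exact_mod_cast le_top)
  apply h1.congr
  rintro ⟨r, a, z⟩ hq
  exact (dR_eqf (R := r) (φ := a) (Z := z) hf hq)

lemma smoothP_dP (hf : SmoothP f) : SmoothP (dP f) := by
  have h1 : ContDiffOn ℝ (⊤ : ℕ∞) (fun q => fderiv ℝ (U f) q (0, 1, 0)) Spos := by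
    apply ContDiffOn.clm_apply _ contDiffOn_const
    exact hf.fderiv_of_isOpen isOpen_Spos (by exact_mod_cast le_top)
  apply h1.congr
  rintro ⟨r, a, z⟩ hq
  exact (dP_eqf (R := r) (φ := a) (Z := z) hf hq)

lemma smoothP_dZ (hf : SmoothP f) : SmoothP (dZ f) := by
  have h1 : ContDiffOn ℝ (⊤ : ℕ∞) (fun q => fderiv ℝ (U f) q (0, 0, 1)) Spos := by
    apply ContDiffOn.clm_apply _ contDiffOn_const
    exact hf.fderiv_of_isOpen isOpen_Spos (by exact_mod_cast le_top)
  apply h1.congr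
  rintro ⟨r, a, z⟩ hq
  exact (dZ_eqf (R := r) (φ := a) (Z := z) hf hq)

end Helper

namespace Helper
variable {f g : F3} {R φ Z : ℝ}

/-! ### First-order pointwise rules -/

lemma dR_mul (hf : SmoothP f) (hg : SmoothP g) (h : 0 < R) :
    dR (fun r a z => f r a z * g r a z) R φ Z
      = dR f R φ Z * g R φ Z + f R φ Z * dR g R φ Z := by
  simp only [dR]; exact deriv_mul (hf.diffR h) (hg.diffR h)

lemma dP_mul (hf : SmoothP f) (hg : SmoothP g) (h : 0 < R) :
    dP (fun r a z => f r a z * g r a z) R φ Z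
      = dP f R φ Z * g R φ Z + f R φ Z * dP g R φ Z := by
  simp only [dP]; exact deriv_mul (hf.diffP h) (hg.diffP h)

lemma dZ_mul (hf : SmoothP f) (hg : SmoothP g) (h : 0 < R) :
    dZ (fun r a z => f r a z * g r a z) R φ Z
      = dZ f R φ Z * g R φ Z + f R φ Z * dZ g R φ Z := by
  simp only [dZ]; exact deriv_mul (hf.diffZ h) (hg.diffZ h)

lemma dR_add (hf : SmoothP f) (hg : SmoothP g) (h : 0 < R) :
    dR (fun r a z => f r a z + g r a z) R φ Z = dR f R φ Z + dR g R φ Z := by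
  simp only [dR]; exact deriv_add (hf.diffR h) (hg.diffR h)

lemma dP_add (hf : SmoothP f) (hg : SmoothP g) (h : 0 < R) :
    dP (fun r a z => f r a z + g r a z) R φ Z = dP f R φ Z + dP g R φ Z := by
  simp only [dP]; exact deriv_add (hf.diffP h) (hg.diffP h)

lemma dZ_add (hf : SmoothP f) (hg : SmoothP g) (h : 0 < R) :
    dZ (fun r a z => f r a z + g r a z) R φ Z = dZ f R φ Z + dZ g R φ Z := by
  simp only [dZ]; exact deriv_add (hf.diffZ h) (hg.diffZ h)

lemma dR_sub (hf : SmoothP f) (hg : SmoothP g) (h : 0 < R) :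
    dR (fun r a z => f r a z - g r a z) R φ Z = dR f R φ Z - dR g R φ Z := by
  simp only [dR]; exact deriv_sub (hf.diffR h) (hg.diffR h)

lemma dP_sub (hf : SmoothP f) (hg : SmoothP g) (h : 0 < R) :
    dP (fun r a z => f r a z - g r a z) R φ Z = dP f R φ Z - dP g R φ Z := by
  simp only [dP]; exact deriv_sub (hf.diffP h) (hg.diffP h)

lemma dZ_sub (hf : SmoothP f) (hg : SmoothP g) (h : 0 < R) :
    dZ (fun r a z => f r a z - g r a z) R φ Z = dZ f R φ Z - dZ g R φ Z := by
  simp only [dZ]; exact deriv_sub (hf.diffZ h) (hg.diffZ h)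

lemma dR_pow (hf : SmoothP f) (n : ℕ) (h : 0 < R) :
    dR (fun r a z => f r a z ^ n) R φ Z = (n : ℝ) * f R φ Z ^ (n - 1) * dR f R φ Z := by
  simp only [dR]; exact deriv_fun_pow (hf.diffR h) n

lemma dP_pow (hf : SmoothP f) (n : ℕ) (h : 0 < R) :
    dP (fun r a z => f r a z ^ n) R φ Z = (n : ℝ) * f R φ Z ^ (n - 1) * dP f R φ Z := by
  simp only [dP]; exact deriv_fun_pow (hf.diffP h) n

lemma dZ_pow (hf : SmoothP f) (n : ℕ) (h : 0 < R) :
    dZ (fun r a z => f r a z ^ n) R φ Z = (n : ℝ) * f R φ Z ^ (n - 1) * dZ f R φ Z := by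
  simp only [dZ]; exact deriv_fun_pow (hf.diffZ h) n

/-! ### Unconditional neg rules (function level) -/

lemma dR_negF (f : F3) : dR (fun r a z => -(f r a z)) = fun R φ Z => -(dR f R φ Z) := by
  funext R φ Z; simp only [dR]; exact deriv.neg

lemma dP_negF (f : F3) : dP (fun r a z => -(f r a z)) = fun R φ Z => -(dP f R φ Z) := by
  funext R φ Z; simp only [dP]; exact deriv.neg

lemma dZ_negF (f : F3) : dZ (fun r a z => -(f r a z)) = fun R φ Z => -(dZ f R φ Z) := by
  funext R φ Z; simp only [dZ]; exact deriv.neg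

/-! ### Leaf rules (unconditional, valid at every point) -/

lemma dR_var : dR (fun r _ _ => r) R φ Z = 1 := by simp [dR]

lemma dR_var_pow {n : ℕ} : dR (fun r _ _ => r ^ n) R φ Z = (n : ℝ) * R ^ (n - 1) := by
  simp [dR]

lemma dR_inv : dR (fun r _ _ => r⁻¹) R φ Z = -(R ^ 2)⁻¹ := by
  simp [dR]

lemma dR_inv_pow2 : dR (fun r _ _ => (r ^ 2)⁻¹) R φ Z = -2 * (R ^ 3)⁻¹ := by
  have : (fun r : ℝ => (r ^ 2)⁻¹) = fun r : ℝ => r ^ (-2 : ℤ) := by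
    funext r; simp [zpow_neg]
  simp only [dR, this, deriv_zpow]
  norm_num [zpow_neg]

lemma dR_inv_pow3 : dR (fun r _ _ => (r ^ 3)⁻¹) R φ Z = -3 * (R ^ 4)⁻¹ := by
  have : (fun r : ℝ => (r ^ 3)⁻¹) = fun r : ℝ => r ^ (-3 : ℤ) := by
    funext r; simp [zpow_neg]
  simp only [dR, this, deriv_zpow]
  norm_num [zpow_neg]

lemma dR_indep (g : ℝ → ℝ → ℝ) : dR (fun _ a z => g a z) R φ Z = 0 := by
  simp [dR]

lemma dP_indep (g : ℝ → ℝ → ℝ) : dP (fun r _ z => g r z) R φ Z = 0 := by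
  simp [dP]

lemma dZ_indep (g : ℝ → ℝ → ℝ) : dZ (fun r a _ => g r a) R φ Z = 0 := by
  simp [dZ]

end Helper

namespace Helper
variable {f g : F3} {R φ Z : ℝ}

/-! ### Second fderiv machinery -/

lemma SmoothP.hasFDerivAt2 (hf : SmoothP f) (h : 0 < R) :
    HasFDerivAt (fderiv ℝ (U f)) (fderiv ℝ (fderiv ℝ (U f)) (R, φ, Z)) (R, φ, Z) := by
  have h1 : ContDiffAt ℝ (⊤ : ℕ∞) (fderiv ℝ (U f)) (R, φ, Z) :=
    (hf.contDiffAt h).fderiv_right (by exact_mod_cast le_top)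
  exact (h1.differentiableAt (by simp)).hasFDerivAt

lemma symm2 (hf : SmoothP f) (h : 0 < R) (v w : ℝ × ℝ × ℝ) :
    fderiv ℝ (fderiv ℝ (U f)) (R, φ, Z) v w
      = fderiv ℝ (fderiv ℝ (U f)) (R, φ, Z) w v := by
  have := ((hf.contDiffAt (φ := φ) (Z := Z) h).isSymmSndFDerivAt
    (n := ((⊤ : ℕ∞) : WithTop ℕ∞)) (by rw [minSmoothness_of_isRCLikeNormedField]; show ((2 : ℕ∞) : WithTop ℕ∞) ≤ _; exact WithTop.coe_le_coe.mpr le_top))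
  exact this v w

/-- Outer `dR` of a field that agrees on `Spos` with `q ↦ D(U f)(q) v`. -/
lemma outer_dR (hf : SmoothP f) (g : F3) (v : ℝ × ℝ × ℝ)
    (hg : ∀ r a z, 0 < r → g r a z = fderiv ℝ (U f) (r, a, z) v) (h : 0 < R) :
    dR g R φ Z = fderiv ℝ (fderiv ℝ (U f)) (R, φ, Z) (1, 0, 0) v := by
  have he : (fun r => g r φ Z) =ᶠ[nhds R] fun r => fderiv ℝ (U f) (r, φ, Z) v := by
    filter_upwards [eventually_gt_nhds h] with r hr
    exact hg r φ Z hr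
  have hc : HasDerivAt (fun r => fderiv ℝ (U f) (r, φ, Z))
      (fderiv ℝ (fderiv ℝ (U f)) (R, φ, Z) (1, 0, 0)) R :=
    (hf.hasFDerivAt2 h).comp_hasDerivAt R (hasDerivAt_lineR φ Z R)
  have hc2 : HasDerivAt (fun r => fderiv ℝ (U f) (r, φ, Z) v)
      (fderiv ℝ (fderiv ℝ (U f)) (R, φ, Z) (1, 0, 0) v) R := by
    have := hc.clm_apply (hasDerivAt_const R v)
    simpa using this
  rw [dR, he.deriv_eq, hc2.deriv]

lemma outer_dP (hf : SmoothP f) (g : F3) (v : ℝ × ℝ × ℝ)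
    (hg : ∀ r a z, 0 < r → g r a z = fderiv ℝ (U f) (r, a, z) v) (h : 0 < R) :
    dP g R φ Z = fderiv ℝ (fderiv ℝ (U f)) (R, φ, Z) (0, 1, 0) v := by
  have he : (fun a => g R a Z) = fun a => fderiv ℝ (U f) (R, a, Z) v :=
    funext fun a => hg R a Z h
  have hc : HasDerivAt (fun a => fderiv ℝ (U f) (R, a, Z))
      (fderiv ℝ (fderiv ℝ (U f)) (R, φ, Z) (0, 1, 0)) φ :=
    (hf.hasFDerivAt2 h).comp_hasDerivAt φ (hasDerivAt_lineP R Z φ)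
  have hc2 : HasDerivAt (fun a => fderiv ℝ (U f) (R, a, Z) v)
      (fderiv ℝ (fderiv ℝ (U f)) (R, φ, Z) (0, 1, 0) v) φ := by
    have := hc.clm_apply (hasDerivAt_const φ v)
    simpa using this
  rw [dP, he, hc2.deriv]

lemma outer_dZ (hf : SmoothP f) (g : F3) (v : ℝ × ℝ × ℝ)
    (hg : ∀ r a z, 0 < r → g r a z = fderiv ℝ (U f) (r, a, z) v) (h : 0 < R) :
    dZ g R φ Z = fderiv ℝ (fderiv ℝ (U f)) (R, φ, Z) (0, 0, 1) v := by
  have he : (fun z => g R φ z) = fun z => fderiv ℝ (U f) (R, φ, z) v :=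
    funext fun z => hg R φ z h
  have hc : HasDerivAt (fun z => fderiv ℝ (U f) (R, φ, z))
      (fderiv ℝ (fderiv ℝ (U f)) (R, φ, Z) (0, 0, 1)) Z :=
    (hf.hasFDerivAt2 h).comp_hasDerivAt Z (hasDerivAt_lineZ R φ Z)
  have hc2 : HasDerivAt (fun z => fderiv ℝ (U f) (R, φ, z) v)
      (fderiv ℝ (fderiv ℝ (U f)) (R, φ, Z) (0, 0, 1) v) Z := by
    have := hc.clm_apply (hasDerivAt_const Z v)
    simpa using this
  rw [dZ, he, hc2.deriv]

/-! ### Clairaut canonicalization rules: `dP` outermost, then `dZ`, then `dR`. -/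

lemma dR_dZ (hf : SmoothP f) (h : 0 < R) :
    dR (dZ f) R φ Z = dZ (dR f) R φ Z := by
  rw [outer_dR hf (dZ f) (0,0,1) (fun r a z hr => dZ_eqf hf hr) h,
      outer_dZ hf (dR f) (1,0,0) (fun r a z hr => dR_eqf hf hr) h,
      symm2 hf h]

lemma dR_dP (hf : SmoothP f) (h : 0 < R) :
    dR (dP f) R φ Z = dP (dR f) R φ Z := by
  rw [outer_dR hf (dP f) (0,1,0) (fun r a z hr => dP_eqf hf hr) h,
      outer_dP hf (dR f) (1,0,0) (fun r a z hr => dR_eqf hf hr) h,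
      symm2 hf h]

lemma dZ_dP (hf : SmoothP f) (h : 0 < R) :
    dZ (dP f) R φ Z = dP (dZ f) R φ Z := by
  rw [outer_dZ hf (dP f) (0,1,0) (fun r a z hr => dP_eqf hf hr) h,
      outer_dP hf (dZ f) (0,0,1) (fun r a z hr => dZ_eqf hf hr) h,
      symm2 hf h]

/-! ### Second-order rules: outer derivative of an inner product rule. -/

lemma dR_dR_mul (hf : SmoothP f) (hg : SmoothP g) (h : 0 < R) :
    dR (dR (fun r a z => f r a z * g r a z)) R φ Z
      = dR (fun r a z => dR f r a z * g r a z + f r a z * dR g r a z) R φ Z := by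
  simp only [dR]
  apply Filter.EventuallyEq.deriv_eq
  filter_upwards [eventually_gt_nhds h] with r hr
  exact dR_mul hf hg hr

lemma dR_dP_mul (hf : SmoothP f) (hg : SmoothP g) (h : 0 < R) :
    dR (dP (fun r a z => f r a z * g r a z)) R φ Z
      = dR (fun r a z => dP f r a z * g r a z + f r a z * dP g r a z) R φ Z := by
  simp only [dR]
  apply Filter.EventuallyEq.deriv_eq
  filter_upwards [eventually_gt_nhds h] with r hr
  exact dP_mul hf hg hr

lemma dR_dZ_mul (hf : SmoothP f) (hg : SmoothP g) (h : 0 < R) :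
    dR (dZ (fun r a z => f r a z * g r a z)) R φ Z
      = dR (fun r a z => dZ f r a z * g r a z + f r a z * dZ g r a z) R φ Z := by
  simp only [dR]
  apply Filter.EventuallyEq.deriv_eq
  filter_upwards [eventually_gt_nhds h] with r hr
  exact dZ_mul hf hg hr

lemma dZ_dR_mul (hf : SmoothP f) (hg : SmoothP g) (h : 0 < R) :
    dZ (dR (fun r a z => f r a z * g r a z)) R φ Z
      = dZ (fun r a z => dR f r a z * g r a z + f r a z * dR g r a z) R φ Z := by
  simp only [dZ]
  congr 1
  funext z
  exact dR_mul hf hg h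

lemma dZ_dP_mul (hf : SmoothP f) (hg : SmoothP g) (h : 0 < R) :
    dZ (dP (fun r a z => f r a z * g r a z)) R φ Z
      = dZ (fun r a z => dP f r a z * g r a z + f r a z * dP g r a z) R φ Z := by
  simp only [dZ]
  congr 1
  funext z
  exact dP_mul hf hg h

lemma dZ_dZ_mul (hf : SmoothP f) (hg : SmoothP g) (h : 0 < R) :
    dZ (dZ (fun r a z => f r a z * g r a z)) R φ Z
      = dZ (fun r a z => dZ f r a z * g r a z + f r a z * dZ g r a z) R φ Z := by
  simp only [dZ]
  congr 1
  funext z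
  exact dZ_mul hf hg h

end Helper


namespace Helper
lemma rh_def (ρ : F3) : rh ρ = fun R φ Z => R ^ 2 * ρ R φ Z := rfl
lemma XR_def (ψ vpar : F3) : XR ψ vpar = fun R φ Z => vpar R φ Z * ((1 / R) * dZ ψ R φ Z) := rfl
lemma XP_def (F0 : ℝ) (vpar : F3) : XP F0 vpar = fun R φ Z => vpar R φ Z * (F0 / R) := rfl
lemma XZ_def (ψ vpar : F3) : XZ ψ vpar = fun R φ Z => vpar R φ Z * (-(1 / R) * dR ψ R φ Z) := rfl
end Helper

namespace Helper
variable {f g : F3} {R φ Z : ℝ}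

lemma dP_dR_mul (hf : SmoothP f) (hg : SmoothP g) (h : 0 < R) :
    dP (dR (fun r a z => f r a z * g r a z)) R φ Z
      = dP (fun r a z => dR f r a z * g r a z + f r a z * dR g r a z) R φ Z := by
  simp only [dP]
  congr 1
  funext a
  exact dR_mul hf hg h

lemma dP_dP_mul (hf : SmoothP f) (hg : SmoothP g) (h : 0 < R) :
    dP (dP (fun r a z => f r a z * g r a z)) R φ Z
      = dP (fun r a z => dP f r a z * g r a z + f r a z * dP g r a z) R φ Z := by
  simp only [dP]
  congr 1
  funext a
  exact dP_mul hf hg h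

lemma dP_dZ_mul (hf : SmoothP f) (hg : SmoothP g) (h : 0 < R) :
    dP (dZ (fun r a z => f r a z * g r a z)) R φ Z
      = dP (fun r a z => dZ f r a z * g r a z + f r a z * dZ g r a z) R φ Z := by
  simp only [dP]
  congr 1
  funext a
  exact dZ_mul hf hg h

end Helper

namespace Helper
variable {f g : F3} {R φ Z : ℝ}

lemma dR_inner_RZ (hf : SmoothP f) (h : 0 < R) :
    dR (dR (dZ f)) R φ Z = dR (dZ (dR f)) R φ Z := by
  simp only [dR]
  apply Filter.EventuallyEq.deriv_eq
  filter_upwards [eventually_gt_nhds h] with r hr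
  exact dR_dZ hf hr

lemma dZ_inner_RZ (hf : SmoothP f) (h : 0 < R) :
    dZ (dR (dZ f)) R φ Z = dZ (dZ (dR f)) R φ Z := by
  simp only [dZ]
  congr 1
  funext z
  exact dR_dZ hf h

lemma dP_inner_RZ (hf : SmoothP f) (h : 0 < R) :
    dP (dR (dZ f)) R φ Z = dP (dZ (dR f)) R φ Z := by
  simp only [dP]
  congr 1
  funext a
  exact dR_dZ hf h

lemma dR_inner_RP (hf : SmoothP f) (h : 0 < R) :
    dR (dR (dP f)) R φ Z = dR (dP (dR f)) R φ Z := by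
  simp only [dR]
  apply Filter.EventuallyEq.deriv_eq
  filter_upwards [eventually_gt_nhds h] with r hr
  exact dR_dP hf hr

lemma dZ_inner_RP (hf : SmoothP f) (h : 0 < R) :
    dZ (dR (dP f)) R φ Z = dZ (dP (dR f)) R φ Z := by
  simp only [dZ]
  congr 1
  funext z
  exact dR_dP hf h

lemma dP_inner_RP (hf : SmoothP f) (h : 0 < R) :
    dP (dR (dP f)) R φ Z = dP (dP (dR f)) R φ Z := by
  simp only [dP]
  congr 1
  funext a
  exact dR_dP hf h

lemma dR_inner_ZP (hf : SmoothP f) (h : 0 < R) :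
    dR (dZ (dP f)) R φ Z = dR (dP (dZ f)) R φ Z := by
  simp only [dR]
  apply Filter.EventuallyEq.deriv_eq
  filter_upwards [eventually_gt_nhds h] with r hr
  exact dZ_dP hf hr

lemma dZ_inner_ZP (hf : SmoothP f) (h : 0 < R) :
    dZ (dZ (dP f)) R φ Z = dZ (dP (dZ f)) R φ Z := by
  simp only [dZ]
  congr 1
  funext z
  exact dZ_dP hf h

lemma dP_inner_ZP (hf : SmoothP f) (h : 0 < R) :
    dP (dZ (dP f)) R φ Z = dP (dP (dZ f)) R φ Z := by
  simp only [dP]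
  congr 1
  funext a
  exact dZ_dP hf h

end Helper

set_option maxHeartbeats 4000000 in
/-- `e_φ`-component of the curl of `R²ρ ((v∥B)·∇(v∥B))`. -/
theorem curl_phi_of_parallel_advection (F0 : ℝ) (ψ vpar ρ : F3)
    (hψ : Smooth3 ψ) (hv : Smooth3 vpar) (hρ : Smooth3 ρ) :
    ∀ R φ Z : ℝ, 0 < R →
      dR (fun r a z => r ^ 2 * ρ r a z
            * advVZ (XR ψ vpar) (XP F0 vpar) (XZ ψ vpar)
                (XR ψ vpar) (XP F0 vpar) (XZ ψ vpar) r a z) R φ Z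
        - dZ (fun r a z => r ^ 2 * ρ r a z
            * advVR (XR ψ vpar) (XP F0 vpar) (XZ ψ vpar)
                (XR ψ vpar) (XP F0 vpar) (XZ ψ vpar) r a z) R φ Z
      = -pb (fun r a z => ρ r a z * vpar r a z ^ 2 * GS ψ r a z) ψ R φ Z
        - pb (fun r a z => ρ r a z * vpar r a z * gdot vpar ψ r a z) ψ R φ Z
        + (1 / 2) * pb (rh ρ) (fun r a z => vpar r a z ^ 2 * Bpol2 ψ r a z) R φ Z
        - dZ (fun r a z => rh ρ r a z * (F0 / r ^ 3) * vpar r a z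
            * dP (fun r' a' z' => vpar r' a' z' * dZ ψ r' a' z') r a z) R φ Z
        - dR (fun r a z => rh ρ r a z * (F0 / r ^ 3) * vpar r a z
            * dP (fun r' a' z' => vpar r' a' z' * dR ψ r' a' z') r a z) R φ Z
        + dZ (fun r a z => rh ρ r a z * (F0 ^ 2 / r ^ 3) * vpar r a z ^ 2) R φ Z := by
  intro R φ Z hR
  have hψ' : Helper.SmoothP ψ := Helper.Smooth3.smoothP hψ
  have hv' : Helper.SmoothP vpar := Helper.Smooth3.smoothP hv
  have hρ' : Helper.SmoothP ρ := Helper.Smooth3.smoothP hρ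
  simp only [Helper.rh_def, Helper.XR_def, Helper.XP_def, Helper.XZ_def, advVZ, advVR, advS, XR, XP, XZ, BR, BP, BZ, pb, GS, rh, gdot, Bpol2,
    div_eq_mul_inv, one_mul, mul_one, neg_mul, mul_neg, neg_neg]
  simp (config := { maxDischargeDepth := 60 }) only [div_eq_mul_inv, one_mul, mul_one,
    neg_mul, mul_neg, neg_neg, mul_zero, zero_mul, add_zero, zero_add, sub_zero,
    Helper.dR_negF, Helper.dP_negF, Helper.dZ_negF,
    Helper.dR_dR_mul, Helper.dR_dP_mul, Helper.dR_dZ_mul,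
    Helper.dZ_dR_mul, Helper.dZ_dP_mul, Helper.dZ_dZ_mul,
    Helper.dP_dR_mul, Helper.dP_dP_mul, Helper.dP_dZ_mul,
    Helper.dR_dZ, Helper.dR_dP, Helper.dZ_dP,
    Helper.dR_inner_RZ, Helper.dZ_inner_RZ, Helper.dP_inner_RZ, Helper.dR_inner_RP, Helper.dZ_inner_RP, Helper.dP_inner_RP, Helper.dR_inner_ZP, Helper.dZ_inner_ZP, Helper.dP_inner_ZP,
    Helper.dR_mul, Helper.dP_mul, Helper.dZ_mul,
    Helper.dR_add, Helper.dP_add, Helper.dZ_add,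
    Helper.dR_sub, Helper.dP_sub, Helper.dZ_sub,
    Helper.dR_pow, Helper.dP_pow, Helper.dZ_pow,
    Helper.dR_var, Helper.dR_var_pow, Helper.dR_inv, Helper.dR_inv_pow2, Helper.dR_inv_pow3,
    Helper.dR_indep, Helper.dP_indep, Helper.dZ_indep,
    Helper.smoothP_mul, Helper.smoothP_add, Helper.smoothP_sub, Helper.smoothP_neg,
    Helper.smoothP_pow, Helper.smoothP_const, Helper.smoothP_r, Helper.smoothP_inv,
    Helper.smoothP_invpow, Helper.smoothP_dR, Helper.smoothP_dP, Helper.smoothP_dZ,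
    hψ', hv', hρ', hR, Nat.cast_ofNat, Nat.reduceSub, pow_one]
  field_simp
  ring
end
end

section
/- Let F0∈ℝ and let ψ,u,v∥,ρ be smooth on {R>0}×ℝ_φ×ℝ_Z; set B := ((1/R)∂_Zψ)e_R+(F0/R)e_φ+(−(1/R)∂_Rψ)e_Z, v_pol := (−R∂_Zu)e_R+(R∂_Ru)e_Z, and |B|² := (F0²+(∂_Rψ)²+(∂_Zψ)²)/R². Then B·( ρ (v_pol·∇(v∥B)) ) = Rρ|B|²[u,v∥] + Rρv∥[u, |B|²/2]. -/
noncomputable section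
set_option linter.unusedVariables false

open Real

lemma smooth3_hdR {f : F3} (hf : Smooth3 f) (R φ Z : ℝ) :
    HasDerivAt (fun r => f r φ Z) (dR f R φ Z) R := by
  have hD := ((hf.differentiable (by simp)) (R, φ, Z)).hasFDerivAt
  have hL : HasDerivAt (fun r : ℝ => ((r, φ, Z) : ℝ × ℝ × ℝ)) ((1:ℝ),(0:ℝ),(0:ℝ)) R :=
    HasDerivAt.prodMk (hasDerivAt_id R) (HasDerivAt.prodMk (hasDerivAt_const R φ) (hasDerivAt_const R Z))
  exact (hD.comp_hasDerivAt R hL).differentiableAt.hasDerivAt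

lemma smooth3_hdZ {f : F3} (hf : Smooth3 f) (R φ Z : ℝ) :
    HasDerivAt (fun z => f R φ z) (dZ f R φ Z) Z := by
  have hD := ((hf.differentiable (by simp)) (R, φ, Z)).hasFDerivAt
  have hL : HasDerivAt (fun z : ℝ => ((R, φ, z) : ℝ × ℝ × ℝ)) ((0:ℝ),(0:ℝ),(1:ℝ)) Z :=
    HasDerivAt.prodMk (hasDerivAt_const Z R) (HasDerivAt.prodMk (hasDerivAt_const Z φ) (hasDerivAt_id Z))
  exact (hD.comp_hasDerivAt Z hL).differentiableAt.hasDerivAt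

lemma smooth3_dR {f : F3} (hf : Smooth3 f) : Smooth3 (dR f) := by
  have key : ∀ q : ℝ × ℝ × ℝ, dR f q.1 q.2.1 q.2.2
      = fderiv ℝ (fun q : ℝ × ℝ × ℝ => f q.1 q.2.1 q.2.2) q ((1:ℝ),(0:ℝ),(0:ℝ)) := by
    intro q
    have hD := ((hf.differentiable (by simp)) q).hasFDerivAt
    have hL : HasDerivAt (fun r : ℝ => ((r, q.2.1, q.2.2) : ℝ × ℝ × ℝ)) ((1:ℝ),(0:ℝ),(0:ℝ)) q.1 :=
      HasDerivAt.prodMk (hasDerivAt_id q.1) (HasDerivAt.prodMk (hasDerivAt_const q.1 q.2.1) (hasDerivAt_const q.1 q.2.2))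
    exact (hD.comp_hasDerivAt q.1 hL).deriv
  have h1 : ContDiff ℝ (⊤ : ℕ∞) (fderiv ℝ (fun q : ℝ × ℝ × ℝ => f q.1 q.2.1 q.2.2)) :=
    hf.fderiv_right (m := (⊤:ℕ∞)) (mod_cast le_top)
  have h2 := h1.clm_apply (contDiff_const (c := ((1:ℝ),(0:ℝ),(0:ℝ))))
  have heq : (fun q : ℝ × ℝ × ℝ => dR f q.1 q.2.1 q.2.2)
      = fun q : ℝ × ℝ × ℝ => fderiv ℝ (fun q : ℝ × ℝ × ℝ => f q.1 q.2.1 q.2.2) q ((1:ℝ),(0:ℝ),(0:ℝ)) :=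
    funext key
  rw [Smooth3, heq]
  exact h2

lemma smooth3_dZ {f : F3} (hf : Smooth3 f) : Smooth3 (dZ f) := by
  have key : ∀ q : ℝ × ℝ × ℝ, dZ f q.1 q.2.1 q.2.2
      = fderiv ℝ (fun q : ℝ × ℝ × ℝ => f q.1 q.2.1 q.2.2) q ((0:ℝ),(0:ℝ),(1:ℝ)) := by
    intro q
    have hD := ((hf.differentiable (by simp)) q).hasFDerivAt
    have hL : HasDerivAt (fun z : ℝ => ((q.1, q.2.1, z) : ℝ × ℝ × ℝ)) ((0:ℝ),(0:ℝ),(1:ℝ)) q.2.2 :=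
      HasDerivAt.prodMk (hasDerivAt_const q.2.2 q.1) (HasDerivAt.prodMk (hasDerivAt_const q.2.2 q.2.1) (hasDerivAt_id q.2.2))
    exact (hD.comp_hasDerivAt q.2.2 hL).deriv
  have h1 : ContDiff ℝ (⊤ : ℕ∞) (fderiv ℝ (fun q : ℝ × ℝ × ℝ => f q.1 q.2.1 q.2.2)) :=
    hf.fderiv_right (m := (⊤:ℕ∞)) (mod_cast le_top)
  have h2 := h1.clm_apply (contDiff_const (c := ((0:ℝ),(0:ℝ),(1:ℝ))))
  have heq : (fun q : ℝ × ℝ × ℝ => dZ f q.1 q.2.1 q.2.2)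
      = fun q : ℝ × ℝ × ℝ => fderiv ℝ (fun q : ℝ × ℝ × ℝ => f q.1 q.2.1 q.2.2) q ((0:ℝ),(0:ℝ),(1:ℝ)) :=
    funext key
  rw [Smooth3, heq]
  exact h2

/-- `B·(ρ (v_pol·∇(v∥B))) = Rρ|B|²[u,v∥] + Rρv∥[u,|B|²/2]`. -/
theorem B_dot_mixed_advection_pol_par (F0 : ℝ) (ψ u vpar ρ : F3)
    (hψ : Smooth3 ψ) (hu : Smooth3 u) (hv : Smooth3 vpar) (hρ : Smooth3 ρ) :
    ∀ R φ Z : ℝ, 0 < R →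
      BR ψ R φ Z * (ρ R φ Z
          * advVR (vR u) zeroF (vZ u) (XR ψ vpar) (XP F0 vpar) (XZ ψ vpar) R φ Z)
        + BP F0 R φ Z * (ρ R φ Z
          * advVP (vR u) zeroF (vZ u) (XR ψ vpar) (XP F0 vpar) (XZ ψ vpar) R φ Z)
        + BZ ψ R φ Z * (ρ R φ Z
          * advVZ (vR u) zeroF (vZ u) (XR ψ vpar) (XP F0 vpar) (XZ ψ vpar) R φ Z)
      = R * ρ R φ Z * B2 F0 ψ R φ Z * pb u vpar R φ Z
        + R * ρ R φ Z * vpar R φ Z * pb u (fun r a z => B2 F0 ψ r a z / 2) R φ Z := by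
  intro R φ Z hR
  have hRne : R ≠ 0 := hR.ne'
  have hψZs : Smooth3 (dZ ψ) := smooth3_dZ hψ
  have hψRs : Smooth3 (dR ψ) := smooth3_dR hψ
  have hv_r := smooth3_hdR hv R φ Z
  have hv_z := smooth3_hdZ hv R φ Z
  have ha_r := smooth3_hdR hψRs R φ Z
  have ha_z := smooth3_hdZ hψRs R φ Z
  have hb_r := smooth3_hdR hψZs R φ Z
  have hb_z := smooth3_hdZ hψZs R φ Z
  have hinv : HasDerivAt (fun r : ℝ => 1 / r) (-(1 / R ^ 2)) R := by
    simpa [one_div] using hasDerivAt_inv hRne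
  have A1 : dR (XR ψ vpar) R φ Z = _ := (hv_r.mul (hinv.mul hb_r)).deriv
  have A2 : dZ (XR ψ vpar) R φ Z = _ :=
    (hv_z.mul ((hasDerivAt_const Z (1 / R)).mul hb_z)).deriv
  have A3 : dR (XP F0 vpar) R φ Z = _ :=
    (hv_r.mul ((hasDerivAt_const R F0).div (hasDerivAt_id R) hRne)).deriv
  have A4 : dZ (XP F0 vpar) R φ Z = _ :=
    (hv_z.mul (hasDerivAt_const Z (F0 / R))).deriv
  have A5 : dR (XZ ψ vpar) R φ Z = _ := (hv_r.mul (hinv.neg.mul ha_r)).deriv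
  have A6 : dZ (XZ ψ vpar) R φ Z = _ :=
    (hv_z.mul ((hasDerivAt_const Z (-(1 / R))).mul ha_z)).deriv
  have A7 : dR (fun r a z => B2 F0 ψ r a z / 2) R φ Z = _ :=
    (((((hasDerivAt_const R (F0 ^ 2)).add (ha_r.pow 2)).add (hb_r.pow 2)).div
      (hasDerivAt_pow 2 R) (pow_ne_zero 2 hRne)).div_const 2).deriv
  have A8 : dZ (fun r a z => B2 F0 ψ r a z / 2) R φ Z = _ :=
    (((((hasDerivAt_const Z (F0 ^ 2)).add (ha_z.pow 2)).add (hb_z.pow 2)).div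
      (hasDerivAt_const Z (R ^ 2)) (pow_ne_zero 2 hRne)).div_const 2).deriv
  simp only [advVR, advVP, advVZ, advS, vR, vZ, zeroF, pb, BR, BP, BZ]
  rw [A1, A2, A3, A4, A5, A6, A7, A8,
    show B2 F0 ψ R φ Z = (F0 ^ 2 + dR ψ R φ Z ^ 2 + dZ ψ R φ Z ^ 2) / R ^ 2 from rfl]
  simp only [Pi.mul_apply, Pi.div_apply, Pi.neg_apply, Pi.add_apply, Pi.pow_apply, id]
  field_simp
  ring
end
end
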